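/- Let m ≥ 1 be an integer and write P_μ^m(η) = α + βη + γη² + δη³ (type I_{1,3}); set R_m(μ) = (γ+δ)(β+γ+δ) − αδ, the Hurwitz determinant Δ₂ of P_μ^m. Then R_m(μ) = (m+1)(m+2)μ³ · [4+(m−1)μ] · (3+mμ) · [5m+4+(m²−2m−2)μ]. For m ≥ 3, R_m(μ) > 0 for all μ > 0. For m = 1 and m = 2, R_m has exactly one positive root ν_m, with ν₁ = 3 and ν₂ = 7, and ν_m > μ_m where μ_m is the unique positive root of q_m(μ) = P_μ^m(1/2). -/
import Mathlib


/-- Degree-0 coefficient `α` of the type `I_{1,3}` representative polynomial. -/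
noncomputable def coeffA (μ : ℝ) : ℝ := (1 - μ) * (2 - μ) * (3 - μ)

/-- Degree-1 coefficient `β` of the type `I_{1,3}` representative polynomial. -/
noncomputable def coeffB (m : ℕ) (μ : ℝ) : ℝ :=
  ((m : ℝ) + 1) * μ * (1 - μ) * (11 - 7 * μ)

/-- Degree-2 coefficient `γ` of the type `I_{1,3}` representative polynomial. -/
noncomputable def coeffC (m : ℕ) (μ : ℝ) : ℝ :=
  6 * ((m : ℝ) + 1) * ((m : ℝ) + 2) * (1 - μ) * μ ^ 2

/-- Degree-3 coefficient `δ` of the type `I_{1,3}` representative polynomial. -/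
noncomputable def coeffD (m : ℕ) (μ : ℝ) : ℝ :=
  ((m : ℝ) + 1) * ((m : ℝ) + 2) * ((m : ℝ) + 3) * μ ^ 3

/-- Hurwitz determinant `Δ₂ = (γ+δ)(β+γ+δ) - αδ` of `P_μ^m` (type `I_{1,3}`). -/
noncomputable def RI13 (m : ℕ) (μ : ℝ) : ℝ :=
  (coeffC m μ + coeffD m μ) * (coeffB m μ + coeffC m μ + coeffD m μ) -
    coeffA μ * coeffD m μ

/-- `q_m(μ) = P_μ^m(1/2)` for type `I_{1,3}`. -/
noncomputable def qI13 (m : ℕ) (μ : ℝ) : ℝ :=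
  coeffA μ + coeffB m μ * (1 / 2) + coeffC m μ * (1 / 2) ^ 2 + coeffD m μ * (1 / 2) ^ 3

/-- Hurwitz determinant `Δ₂` for type `I_{1,3}`: factorization
`R_m(μ) = (m+1)(m+2)μ³[4+(m-1)μ](3+mμ)[5m+4+(m²-2m-2)μ]`; positivity for
`m ≥ 3`; for `m = 1, 2` a unique positive root `ν₁ = 3`, `ν₂ = 7` exceeding the
unique positive root `μ_m` of `q_m`. -/
theorem RI13_sign :
    (∀ m : ℕ, 1 ≤ m → ∀ μ : ℝ,
      RI13 m μ = ((m : ℝ) + 1) * ((m : ℝ) + 2) * μ ^ 3 * (4 + ((m : ℝ) - 1) * μ) *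
        (3 + (m : ℝ) * μ) * (5 * (m : ℝ) + 4 + ((m : ℝ) ^ 2 - 2 * (m : ℝ) - 2) * μ)) ∧
    (∀ m : ℕ, 3 ≤ m → ∀ μ : ℝ, 0 < μ → 0 < RI13 m μ) ∧
    (∃! ν : ℝ, 0 < ν ∧ RI13 1 ν = 0) ∧ RI13 1 3 = 0 ∧
    (∃! ν : ℝ, 0 < ν ∧ RI13 2 ν = 0) ∧ RI13 2 7 = 0 ∧
    (∀ μ₁ : ℝ, 0 < μ₁ → qI13 1 μ₁ = 0 → μ₁ < 3) ∧
    (∀ μ₂ : ℝ, 0 < μ₂ → qI13 2 μ₂ = 0 → μ₂ < 7) := by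
  have hfac : ∀ m : ℕ, ∀ μ : ℝ,
      RI13 m μ = ((m : ℝ) + 1) * ((m : ℝ) + 2) * μ ^ 3 * (4 + ((m : ℝ) - 1) * μ) *
        (3 + (m : ℝ) * μ) * (5 * (m : ℝ) + 4 + ((m : ℝ) ^ 2 - 2 * (m : ℝ) - 2) * μ) := by
    intro m μ
    simp only [RI13, coeffA, coeffB, coeffC, coeffD]
    ring
  refine ⟨fun m _ μ => hfac m μ, ?_, ?_, ?_, ?_, ?_, ?_, ?_⟩
  · intro m hm μ hμ
    rw [hfac]
    have hm' : (3 : ℝ) ≤ (m : ℝ) := by exact_mod_cast hm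
    have h1 : (0 : ℝ) < (m : ℝ) + 1 := by linarith
    have h2 : (0 : ℝ) < (m : ℝ) + 2 := by linarith
    have h3 : (0 : ℝ) < μ ^ 3 := by positivity
    have h4 : (0 : ℝ) < 4 + ((m : ℝ) - 1) * μ := by nlinarith
    have h5 : (0 : ℝ) < 3 + (m : ℝ) * μ := by nlinarith
    have h6 : (0 : ℝ) < 5 * (m : ℝ) + 4 + ((m : ℝ) ^ 2 - 2 * (m : ℝ) - 2) * μ := by nlinarith
    positivity
  · refine ⟨3, ⟨by norm_num, by rw [hfac]; norm_num⟩, ?_⟩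
    rintro ν ⟨hν, hR⟩
    rw [hfac] at hR
    have key : (3 - ν) * (72 * ν ^ 3 * (3 + ν)) = 0 := by push_cast at hR ⊢; nlinarith [hR]
    have hpos : 0 < 72 * ν ^ 3 * (3 + ν) := by positivity
    rcases mul_eq_zero.mp key with h | h
    · linarith
    · exact absurd h hpos.ne'
  · rw [hfac]; norm_num
  · refine ⟨7, ⟨by norm_num, by rw [hfac]; norm_num⟩, ?_⟩
    rintro ν ⟨hν, hR⟩
    rw [hfac] at hR
    have key : (7 - ν) * (24 * ν ^ 3 * (4 + ν) * (3 + 2 * ν)) = 0 := by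
      push_cast at hR ⊢; nlinarith [hR]
    have hpos : 0 < 24 * ν ^ 3 * (4 + ν) * (3 + 2 * ν) := by positivity
    rcases mul_eq_zero.mp key with h | h
    · linarith
    · exact absurd h hpos.ne'
  · rw [hfac]; norm_num
  · intro μ hμ hq
    simp only [qI13, coeffA, coeffB, coeffC, coeffD] at hq
    norm_num at hq
    nlinarith [hq, sq_nonneg μ]
  · intro μ hμ hq
    simp only [qI13, coeffA, coeffB, coeffC, coeffD] at hq
    norm_num at hq
    nlinarith [hq, sq_nonneg μ, sq_nonneg (μ - 7), pow_pos hμ 3]
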